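/- Let k₁, k₂, γ be real numbers with k₁ ≥ 0, k₂ ≥ 0, γ > 0, and let ξ₁, ξ₂, d : ℝ → ℝ satisfy, for every t: ξ₁' (t) = ξ₂(t), ξ₂'(t) = −(1 + k₁k₂)·ξ₁(t) − (k₁ + k₂)·ξ₂(t) + d(t), and d'(t) = −γ·(k₁·ξ₁(t) + ξ₂(t)) (derivatives in the sense of HasDerivAt). Then for all t ≥ 0: ξ₁(t)² + (ξ₂(t) + k₁·ξ₁(t))² + d(t)²/γ ≤ ξ₁(0)² + (ξ₂(0) + k₁·ξ₁(0))² + d(0)²/γ. -/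

import Mathlib

theorem inner_loop_sublevel_bound
    (k₁ k₂ γ : ℝ) (hk₁ : 0 ≤ k₁) (hk₂ : 0 ≤ k₂) (hγ : 0 < γ)
    (ξ₁ ξ₂ d : ℝ → ℝ)
    (hξ₁ : ∀ t, HasDerivAt ξ₁ (ξ₂ t) t)
    (hξ₂ : ∀ t, HasDerivAt ξ₂ (-(1 + k₁ * k₂) * ξ₁ t - (k₁ + k₂) * ξ₂ t + d t) t)
    (hd : ∀ t, HasDerivAt d (-γ * (k₁ * ξ₁ t + ξ₂ t)) t) :
    ∀ t, 0 ≤ t →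
      (ξ₁ t)^2 + (ξ₂ t + k₁ * ξ₁ t)^2 + (d t)^2 / γ
        ≤ (ξ₁ 0)^2 + (ξ₂ 0 + k₁ * ξ₁ 0)^2 + (d 0)^2 / γ := by
  set V : ℝ → ℝ := fun t => (ξ₁ t)^2 + (ξ₂ t + k₁ * ξ₁ t)^2 + (d t)^2 / γ with hV
  have hV' : ∀ t, HasDerivAt V
      (-2 * k₁ * (ξ₁ t)^2 - 2 * k₂ * (ξ₂ t + k₁ * ξ₁ t)^2) t := by
    intro t
    have h1 := ((hξ₁ t).pow 2)
    have h2 := (((hξ₂ t).add ((hξ₁ t).const_mul k₁)).pow 2)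
    have h3 := ((hd t).pow 2).div_const γ
    have h := (h1.add h2).add h3
    refine h.congr_deriv ?_
    simp only [Pi.add_apply]
    field_simp [hγ.ne']
    ring
  have hanti : Antitone V := by
    apply antitone_of_deriv_nonpos
    · exact fun t => ((hV' t).differentiableAt)
    · intro t
      rw [(hV' t).deriv]
      have h1 : 0 ≤ 2 * k₁ * (ξ₁ t)^2 := by positivity
      have h2 : 0 ≤ 2 * k₂ * (ξ₂ t + k₁ * ξ₁ t)^2 := by positivity
      linarith
  exact fun t ht => hanti ht
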